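/- (Wald's equation.) Let (X_t)_{t∈ℕ} be a sequence of real-valued random variables on a probability space and let T be a positive-integer-valued random variable on the same space. Assume: (1) all X_t have the same finite expectation; (2) for all t ∈ ℕ, E[X_t · 1_{{T ≥ t}}] = E[X_t] · Pr[T ≥ t]; (3) ∑_{t=1}^{∞} E[|X_t| · 1_{{T ≥ t}}] < ∞; and (4) E[T] is finite. Then E[∑_{t=1}^{T} X_t] = E[T] · E[X_1]. -/

import Mathlib

open MeasureTheory ENNReal

lemma tsum_ite_nat {M : Type*} [AddCommMonoid M] [TopologicalSpace M] [T2Space M]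
    (f : ℕ → M) (n : ℕ) :
    ∑' t : ℕ, (if t + 1 ≤ n then f t else 0) = ∑ t ∈ Finset.range n, f t := by
  rw [tsum_eq_sum (s := Finset.range n) (f := fun t => if t + 1 ≤ n then f t else 0)
    (fun t ht => by show (if t + 1 ≤ n then f t else 0) = 0; rw [if_neg]; simp only [Finset.mem_range] at ht; omega)]
  refine Finset.sum_congr rfl fun t ht => ?_
  rw [if_pos]
  simp only [Finset.mem_range] at ht; omega

/-- Wald's equation. Let `(X_t)` be a sequence of real-valued random variables and `T` a
positive-integer-valued random variable on a probability space. Assume: (1) all `X_t`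
(`t ≥ 1`) are integrable with the same expectation; (2) for all `t ≥ 1`,
`E[X_t · 1_{T ≥ t}] = E[X_t] · Pr[T ≥ t]`; (3) `∑_{t≥1} E[|X_t| · 1_{T ≥ t}] < ∞`;
(4) `E[T]` is finite. Then `E[∑_{t=1}^{T} X_t] = E[T] · E[X_1]`. -/
theorem wald_equation {Ω : Type*} [MeasureSpace Ω]
    [IsProbabilityMeasure (volume : Measure Ω)]
    (X : ℕ → Ω → ℝ) (T : Ω → ℕ) (hT_meas : Measurable T) (hT_pos : ∀ ω, 1 ≤ T ω)
    (h_int : ∀ t, 1 ≤ t → Integrable (X t))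
    (h_same : ∀ t, 1 ≤ t → ∫ ω, X t ω = ∫ ω, X 1 ω)
    (h_indep : ∀ t, 1 ≤ t →
      ∫ ω in {ω | t ≤ T ω}, X t ω =
        (∫ ω, X t ω) * ((volume : Measure Ω) {ω | t ≤ T ω}).toReal)
    (h_sum : Summable (fun t : ℕ => ∫ ω in {ω | t + 1 ≤ T ω}, |X (t + 1) ω|))
    (hT_int : Integrable (fun ω => (T ω : ℝ))) :
    ∫ ω, ∑ t ∈ Finset.Icc 1 (T ω), X t ω = (∫ ω, (T ω : ℝ)) * ∫ ω, X 1 ω := by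
  set μ : Measure Ω := volume with hμ
  have hS : ∀ t : ℕ, MeasurableSet {ω | t + 1 ≤ T ω} := fun t =>
    hT_meas measurableSet_Ici
  set p : ℕ → ℝ := fun t => (μ {ω | t + 1 ≤ T ω}).toReal with hp
  set F : ℕ → Ω → ℝ := fun t => Set.indicator {ω | t + 1 ≤ T ω} (X (t + 1)) with hF
  -- pointwise identity: finite sum equals tsum of indicators
  have hrange : ∀ (g : ℕ → ℝ) (n : ℕ), ∑ t ∈ Finset.Icc 1 n, g t
      = ∑ t ∈ Finset.range n, g (t + 1) := by
    intro g n
    rw [← Finset.Ico_add_one_right_eq_Icc, Finset.sum_Ico_eq_sum_range]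
    simp [Nat.add_comm 1]
  have hpt : ∀ ω, ∑ t ∈ Finset.Icc 1 (T ω), X t ω = ∑' t : ℕ, F t ω := by
    intro ω
    have h1 : ∀ t : ℕ, F t ω = if t + 1 ≤ T ω then X (t + 1) ω else 0 := by
      intro t
      simp [hF, Set.indicator_apply, Set.mem_setOf_eq]
    rw [tsum_congr h1, tsum_ite_nat (fun t => X (t + 1) ω) (T ω), hrange]
  -- integrability of each indicator
  have hFint : ∀ t : ℕ, Integrable (F t) μ := fun t =>
    (h_int (t + 1) (by omega)).indicator (hS t)
  -- norms
  have hFnorm : ∀ t : ℕ, (∫ ω, ‖F t ω‖ ∂μ) = ∫ ω in {ω | t + 1 ≤ T ω}, |X (t + 1) ω| ∂μ := by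
    intro t
    have : ∀ ω, ‖F t ω‖ = Set.indicator {ω | t + 1 ≤ T ω} (fun ω => |X (t + 1) ω|) ω := by
      intro ω
      rw [hF]
      simp [norm_indicator_eq_indicator_norm, Real.norm_eq_abs]
    rw [integral_congr_ae (Filter.Eventually.of_forall this), integral_indicator (hS t)]
  have hFsum : Summable fun t => ∫ ω, ‖F t ω‖ ∂μ := by
    simpa only [hFnorm] using h_sum
  -- swap integral and sum
  have hswap := integral_tsum_of_summable_integral_norm hFint hFsum
  -- each integral
  have hFval : ∀ t : ℕ, (∫ ω, F t ω ∂μ) = (∫ ω, X 1 ω ∂μ) * p t := by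
    intro t
    rw [hF]
    rw [integral_indicator (hS t), h_indep (t + 1) (by omega), h_same (t + 1) (by omega)]
  -- ENNReal layer cake for T
  have hE : ∑' t : ℕ, μ {ω | t + 1 ≤ T ω} = ∫⁻ ω, (T ω : ℝ≥0∞) ∂μ := by
    have h1 : ∀ t : ℕ, μ {ω | t + 1 ≤ T ω}
        = ∫⁻ ω, Set.indicator {ω | t + 1 ≤ T ω} (fun _ => (1 : ℝ≥0∞)) ω ∂μ := by
      intro t
      rw [lintegral_indicator (hS t)]
      simp
    rw [tsum_congr h1,
      ← lintegral_tsum (fun t => ((measurable_const (a := (1:ℝ≥0∞))).indicator (hS t)).aemeasurable)]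
    refine lintegral_congr fun ω => ?_
    have h2 : ∀ t : ℕ, Set.indicator {ω | t + 1 ≤ T ω} (fun _ => (1 : ℝ≥0∞)) ω
        = if t + 1 ≤ T ω then (1 : ℝ≥0∞) else 0 := by
      intro t; simp [Set.indicator_apply, Set.mem_setOf_eq]
    rw [tsum_congr h2, tsum_ite_nat (fun _ => (1 : ℝ≥0∞)) (T ω)]
    simp
  have hTlint : ∫⁻ ω, (T ω : ℝ≥0∞) ∂μ ≠ ⊤ := by
    have this : ∫⁻ ω, (‖(T ω : ℝ)‖₊ : ℝ≥0∞) ∂μ < ⊤ := hT_int.hasFiniteIntegral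
    have heq : ∀ ω, ((‖(T ω : ℝ)‖₊ : ℝ≥0∞)) = (T ω : ℝ≥0∞) := by
      intro ω
      simp [Real.nnnorm_natCast]
    rw [← lintegral_congr heq]
    exact this.ne
  have hpsum : Summable p := ENNReal.summable_toReal (by rw [hE]; exact hTlint)
  have hTval : ∫ ω, (T ω : ℝ) ∂μ = ∑' t : ℕ, p t := by
    rw [integral_eq_lintegral_of_nonneg_ae (Filter.Eventually.of_forall fun ω => by positivity)
      hT_int.aestronglyMeasurable]
    have : ∀ ω, ENNReal.ofReal ((T ω : ℝ)) = (T ω : ℝ≥0∞) := fun ω => by simp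
    rw [lintegral_congr this, ← hE, ENNReal.tsum_toReal_eq (fun t => measure_ne_top μ _)]
  calc ∫ ω, ∑ t ∈ Finset.Icc 1 (T ω), X t ω ∂μ
      = ∫ ω, ∑' t : ℕ, F t ω ∂μ := integral_congr_ae (Filter.Eventually.of_forall hpt)
    _ = ∑' t : ℕ, ∫ ω, F t ω ∂μ := hswap.symm
    _ = ∑' t : ℕ, (∫ ω, X 1 ω ∂μ) * p t := tsum_congr hFval
    _ = (∫ ω, X 1 ω ∂μ) * ∑' t : ℕ, p t := tsum_mul_left
    _ = (∫ ω, (T ω : ℝ) ∂μ) * ∫ ω, X 1 ω ∂μ := by rw [hTval, mul_comm]
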